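/- Let G be a finite subgroup of U(2) and let Z = G ∩ {scalar matrices}. Then Z is contained in every maximal abelian subgroup of G, and if H₁ and H₂ are two distinct maximal abelian subgroups of G (maximal among abelian subgroups of G, with respect to inclusion), then H₁ ∩ H₂ = Z. -/

import Mathlib

open Matrix

/-- `MaxAbelianIn H G`: `H` is a maximal abelian subgroup of `G` (both viewed as
subgroups of U(2)), i.e. `H ≤ G`, `H` is abelian, and `H` is maximal with respect to
inclusion among abelian subgroups contained in `G`. -/
def MaxAbelianIn (H G : Subgroup (Matrix.unitaryGroup (Fin 2) ℂ)) : Prop :=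
  H ≤ G ∧ IsMulCommutative H ∧
    ∀ H' : Subgroup (Matrix.unitaryGroup (Fin 2) ℂ),
      H' ≤ G → IsMulCommutative H' → H ≤ H' → H' = H

/-- A diagonal matrix with equal diagonal entries is scalar. -/
lemma scalar_of_entries (g : Matrix (Fin 2) (Fin 2) ℂ) (h1 : g 0 1 = 0) (h2 : g 1 0 = 0)
    (h3 : g 0 0 = g 1 1) : g = g 0 0 • (1 : Matrix (Fin 2) (Fin 2) ℂ) := by
  ext i j
  fin_cases i <;> fin_cases j <;>
    simp [Matrix.one_apply, h1, h2, h3]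

/-- If `g 0 1 ≠ 0`, any two matrices commuting with `g` commute. -/
lemma key01 (g a b : Matrix (Fin 2) (Fin 2) ℂ) (hg : g 0 1 ≠ 0)
    (ha : a * g = g * a) (hb : b * g = g * b) : a * b = b * a := by
  have ha' : ∀ i j, (a * g) i j = (g * a) i j := fun i j => by rw [ha]
  have hb' : ∀ i j, (b * g) i j = (g * b) i j := fun i j => by rw [hb]
  have ha01 := ha' 0 1; have ha11 := ha' 1 1
  have hb01 := hb' 0 1; have hb11 := hb' 1 1
  simp only [Matrix.mul_apply, Fin.sum_univ_two] at ha01 ha11 hb01 hb11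
  ext i j
  fin_cases i <;> fin_cases j <;>
    simp only [Matrix.mul_apply, Fin.sum_univ_two, Fin.mk_zero, Fin.mk_one]
  · apply mul_left_cancel₀ hg
    linear_combination a 0 1 * hb11 - b 0 1 * ha11
  · apply mul_left_cancel₀ hg
    linear_combination b 0 1 * ha01 - a 0 1 * hb01
  · apply mul_left_cancel₀ (pow_ne_zero 2 hg)
    linear_combination (g 0 1 * (b 0 0 - b 1 1)) * ha11 + (g 0 1 * (a 1 1 - a 0 0)) * hb11
      + (g 1 0 * a 0 1) * hb01 - (g 1 0 * b 0 1) * ha01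
  · apply mul_left_cancel₀ hg
    linear_combination b 0 1 * ha11 - a 0 1 * hb11

/-- The centralizer of a non-scalar 2×2 matrix is commutative. -/
lemma key (g a b : Matrix (Fin 2) (Fin 2) ℂ)
    (hg : ¬ ∃ c : ℂ, g = c • (1 : Matrix (Fin 2) (Fin 2) ℂ))
    (ha : a * g = g * a) (hb : b * g = g * b) : a * b = b * a := by
  by_cases h1 : g 0 1 ≠ 0
  · exact key01 g a b h1 ha hb
  push_neg at h1
  by_cases h2 : g 1 0 ≠ 0
  · have hT : aᵀ * bᵀ = bᵀ * aᵀ := by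
      refine (key01 gᵀ bᵀ aᵀ (by simpa using h2) ?_ ?_).symm
      · rw [← Matrix.transpose_mul, ← Matrix.transpose_mul, hb]
      · rw [← Matrix.transpose_mul, ← Matrix.transpose_mul, ha]
    have := congrArg Matrix.transpose hT
    simpa [← Matrix.transpose_mul] using this.symm
  push_neg at h2
  have h3 : g 0 0 ≠ g 1 1 := by
    intro h3
    exact hg ⟨g 0 0, scalar_of_entries g h1 h2 h3⟩
  have ha' : ∀ i j, (a * g) i j = (g * a) i j := fun i j => by rw [ha]
  have hb' : ∀ i j, (b * g) i j = (g * b) i j := fun i j => by rw [hb]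
  have ha01 := ha' 0 1; have ha10 := ha' 1 0
  have hb01 := hb' 0 1; have hb10 := hb' 1 0
  simp only [Matrix.mul_apply, Fin.sum_univ_two, h1, h2, mul_zero, zero_mul, add_zero,
    zero_add] at ha01 ha10 hb01 hb10
  have hd : g 0 0 - g 1 1 ≠ 0 := sub_ne_zero.2 h3
  have ea : a 0 1 = 0 := by
    apply mul_left_cancel₀ hd; linear_combination -ha01
  have ea' : a 1 0 = 0 := by
    apply mul_left_cancel₀ hd; linear_combination ha10
  have eb : b 0 1 = 0 := by
    apply mul_left_cancel₀ hd; linear_combination -hb01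
  have eb' : b 1 0 = 0 := by
    apply mul_left_cancel₀ hd; linear_combination hb10
  ext i j
  fin_cases i <;> fin_cases j <;>
    simp [Matrix.mul_apply, Fin.sum_univ_two, ea, ea', eb, eb', mul_comm]

/-- The closure of a set of pairwise commuting elements is a commutative subgroup. -/
lemma closure_isCommutative {G : Type*} [Group G] {s : Set G}
    (h : ∀ a ∈ s, ∀ b ∈ s, a * b = b * a) : IsMulCommutative (Subgroup.closure s) := by
  rw [← Subgroup.le_centralizer_iff_isMulCommutative, Subgroup.closure_le]
  intro a ha
  rw [SetLike.mem_coe, Subgroup.mem_centralizer_iff]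
  intro b hb
  have hb' : b ∈ Subgroup.closure s := hb
  induction hb' using Subgroup.closure_induction with
  | mem x hx => exact h x hx a ha
  | one => simp
  | mul x y hx hy ihx ihy =>
      rw [mul_assoc, ihy hy, ← mul_assoc, ihx hx, mul_assoc]
  | inv x hx ih =>
      calc x⁻¹ * a = x⁻¹ * (a * x) * x⁻¹ := by group
        _ = x⁻¹ * (x * a) * x⁻¹ := by rw [← ih hx]
        _ = a * x⁻¹ := by group

/-- Let `G` be a finite subgroup of U(2) and `Z = G ∩ {scalar matrices}`.  Then `Z` is
contained in every maximal abelian subgroup of `G`, and any two distinct maximal abelian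
subgroups of `G` intersect exactly in `Z`. -/
theorem maxAbelian_inter_eq_scalars
    (G : Subgroup (Matrix.unitaryGroup (Fin 2) ℂ)) (hG : Finite G)
    (Z : Set (Matrix.unitaryGroup (Fin 2) ℂ))
    (hZ : Z = {g | g ∈ G ∧ ∃ c : ℂ,
      (g : Matrix (Fin 2) (Fin 2) ℂ) = c • (1 : Matrix (Fin 2) (Fin 2) ℂ)}) :
    (∀ H, MaxAbelianIn H G → Z ⊆ (H : Set (Matrix.unitaryGroup (Fin 2) ℂ))) ∧
    (∀ H₁ H₂, MaxAbelianIn H₁ G → MaxAbelianIn H₂ G → H₁ ≠ H₂ →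
      (H₁ : Set (Matrix.unitaryGroup (Fin 2) ℂ)) ∩ H₂ = Z) := by
  have part1 : ∀ H, MaxAbelianIn H G → Z ⊆ (H : Set (Matrix.unitaryGroup (Fin 2) ℂ)) := by
    rintro H ⟨hHG, hHcomm, hHmax⟩ z hz
    rw [hZ] at hz
    obtain ⟨hzG, c, hc⟩ := hz
    -- z is central in U(2)
    have hzcen : ∀ x : Matrix.unitaryGroup (Fin 2) ℂ, x * z = z * x := by
      intro x
      apply Subtype.ext
      show (x : Matrix (Fin 2) (Fin 2) ℂ) * z = (z : Matrix (Fin 2) (Fin 2) ℂ) * x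
      rw [hc]
      simp [mul_smul_comm, smul_mul_assoc]
    set K := Subgroup.closure ((H : Set (Matrix.unitaryGroup (Fin 2) ℂ)) ∪ {z}) with hK
    have hKG : K ≤ G := by
      rw [hK, Subgroup.closure_le]
      exact Set.union_subset (fun a ha => hHG ha) (by simp [hzG])
    have hKcomm : IsMulCommutative K := by
      apply closure_isCommutative
      rintro a (ha | ha) b (hb | hb)
      · haveI := hHcomm
        exact Subgroup.mul_comm_of_mem_isMulCommutative H ha hb
      · rw [Set.mem_singleton_iff] at hb; subst hb; exact hzcen a
      · rw [Set.mem_singleton_iff] at ha; subst ha; exact (hzcen b).symm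
      · rw [Set.mem_singleton_iff] at ha hb; subst ha; subst hb; rfl
    have hHK : H ≤ K := fun a ha => Subgroup.subset_closure (Or.inl ha)
    have := hHmax K hKG hKcomm hHK
    rw [← this]
    exact Subgroup.subset_closure (Or.inr rfl)
  refine ⟨part1, ?_⟩
  intro H₁ H₂ h1 h2 hne
  apply Set.Subset.antisymm
  · rintro x ⟨hx1, hx2⟩
    rw [hZ]
    refine ⟨h1.1 hx1, ?_⟩
    by_contra hns
    -- x is non-scalar; its centralizer inside G is abelian and contains both H₁ and H₂
    set C := Subgroup.centralizer {x} ⊓ G with hC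
    have hCG : C ≤ G := inf_le_right
    have hCcomm : IsMulCommutative C := by
      constructor; constructor
      intro a b
      have ha : (a : Matrix.unitaryGroup (Fin 2) ℂ) * x = x * a :=
        Subgroup.mem_centralizer_singleton_iff.mp a.2.1
      have hb : (b : Matrix.unitaryGroup (Fin 2) ℂ) * x = x * b :=
        Subgroup.mem_centralizer_singleton_iff.mp b.2.1
      have ha' : ((a : Matrix.unitaryGroup (Fin 2) ℂ) : Matrix (Fin 2) (Fin 2) ℂ) * x =
          (x : Matrix (Fin 2) (Fin 2) ℂ) * a := congrArg Subtype.val ha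
      have hb' : ((b : Matrix.unitaryGroup (Fin 2) ℂ) : Matrix (Fin 2) (Fin 2) ℂ) * x =
          (x : Matrix (Fin 2) (Fin 2) ℂ) * b := congrArg Subtype.val hb
      have := key (x : Matrix (Fin 2) (Fin 2) ℂ) _ _ hns ha' hb'
      exact Subtype.ext (Subtype.ext this)
    have hle : ∀ H, MaxAbelianIn H G → x ∈ H → H ≤ C := by
      rintro H ⟨hHG, hHcomm, _⟩ hxH a ha
      haveI := hHcomm
      refine ⟨Subgroup.mem_centralizer_singleton_iff.mpr ?_, hHG ha⟩
      exact Subgroup.mul_comm_of_mem_isMulCommutative H ha hxH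
    have e1 := h1.2.2 C hCG hCcomm (hle H₁ h1 hx1)
    have e2 := h2.2.2 C hCG hCcomm (hle H₂ h2 hx2)
    exact hne (e1.symm.trans e2)
  · intro z hz
    exact ⟨part1 H₁ h1 hz, part1 H₂ h2 hz⟩
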